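/- Define ω₊ := (1/4)(I₄ + Y₄) and ω₋ := (1/4)(I₄ − Y₄). Then: (a) ω₊ and ω₋ are two-rebit states (real symmetric positive semidefinite 4×4 matrices of trace 1); (b) neither ω₊ nor ω₋ is real-separable; (c) over ℂ, with σ_y the complex 2×2 matrix with rows (0, −i), (i, 0) and P_± := (1/2)(I₂ ± σ_y), the complex embeddings satisfy ι(ω₊) = (1/2)(P₊ ⊗ₖ P₊ + P₋ ⊗ₖ P₋) and ι(ω₋) = (1/2)(P₊ ⊗ₖ P₋ + P₋ ⊗ₖ P₊); hence both embeddings are complex-separable. -/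

import Mathlib

open Matrix Kronecker
open scoped ComplexOrder

/-- The real 2×2 matrix with rows (0, −1) and (1, 0). -/
noncomputable def y : Matrix (Fin 2) (Fin 2) ℝ := !![0, -1; 1, 0]

/-- The real 4×4 matrix representing σ_y ⊗ σ_y. -/
noncomputable def Y₄ : Matrix (Fin 2 × Fin 2) (Fin 2 × Fin 2) ℝ := -(y ⊗ₖ y)

/-- A two-rebit state: a real symmetric positive semidefinite 4×4 matrix of trace 1. -/
def IsTwoRebitState (ρ : Matrix (Fin 2 × Fin 2) (Fin 2 × Fin 2) ℝ) : Prop :=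
  ρ.IsSymm ∧ ρ.PosSemidef ∧ ρ.trace = 1

/-- Real separability: a convex combination of Kronecker products of real
symmetric positive semidefinite trace-one 2×2 matrices. -/
def RealSeparable (ρ : Matrix (Fin 2 × Fin 2) (Fin 2 × Fin 2) ℝ) : Prop :=
  ∃ (n : ℕ) (p : Fin n → ℝ) (A B : Fin n → Matrix (Fin 2) (Fin 2) ℝ),
    (∀ k, 0 ≤ p k) ∧ ((∑ k, p k) = 1) ∧
    (∀ k, (A k).IsSymm ∧ (A k).PosSemidef ∧ (A k).trace = 1) ∧
    (∀ k, (B k).IsSymm ∧ (B k).PosSemidef ∧ (B k).trace = 1) ∧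
    ρ = ∑ k, p k • (A k ⊗ₖ B k)

/-- Complex separability: a convex combination of Kronecker products of
complex positive semidefinite trace-one 2×2 matrices. -/
def ComplexSeparable (σ : Matrix (Fin 2 × Fin 2) (Fin 2 × Fin 2) ℂ) : Prop :=
  ∃ (n : ℕ) (p : Fin n → ℝ) (A B : Fin n → Matrix (Fin 2) (Fin 2) ℂ),
    (∀ k, 0 ≤ p k) ∧ ((∑ k, p k) = 1) ∧
    (∀ k, (A k).PosSemidef ∧ (A k).trace = 1) ∧
    (∀ k, (B k).PosSemidef ∧ (B k).trace = 1) ∧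
    σ = ∑ k, (p k : ℂ) • (A k ⊗ₖ B k)

/-- The state ω₊ = (1/4)(I₄ + σ_y ⊗ σ_y). -/
noncomputable def ωp : Matrix (Fin 2 × Fin 2) (Fin 2 × Fin 2) ℝ :=
  (1 / 4 : ℝ) • ((1 : Matrix (Fin 2 × Fin 2) (Fin 2 × Fin 2) ℝ) + Y₄)

/-- The state ω₋ = (1/4)(I₄ − σ_y ⊗ σ_y). -/
noncomputable def ωm : Matrix (Fin 2 × Fin 2) (Fin 2 × Fin 2) ℝ :=
  (1 / 4 : ℝ) • ((1 : Matrix (Fin 2 × Fin 2) (Fin 2 × Fin 2) ℝ) - Y₄)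

/-- The complex Pauli matrix σ_y. -/
noncomputable def σy : Matrix (Fin 2) (Fin 2) ℂ := !![0, -Complex.I; Complex.I, 0]

/-- The projector P₊ = (1/2)(I₂ + σ_y). -/
noncomputable def Pp : Matrix (Fin 2) (Fin 2) ℂ :=
  (1 / 2 : ℂ) • ((1 : Matrix (Fin 2) (Fin 2) ℂ) + σy)

/-- The projector P₋ = (1/2)(I₂ − σ_y). -/
noncomputable def Pm : Matrix (Fin 2) (Fin 2) ℂ :=
  (1 / 2 : ℂ) • ((1 : Matrix (Fin 2) (Fin 2) ℂ) - σy)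

section Aux

lemma trace_mul_y_eq_zero (A : Matrix (Fin 2) (Fin 2) ℝ) (hA : A.IsSymm) :
    (A * y).trace = 0 := by
  have h : A 0 1 = A 1 0 := by
    have := hA.apply 1 0; simpa [Matrix.transpose_apply] using this
  simp [Matrix.trace_fin_two, Matrix.mul_apply, Fin.sum_univ_two, y, h]

lemma sep_trace (ρ : Matrix (Fin 2 × Fin 2) (Fin 2 × Fin 2) ℝ)
    (h : RealSeparable ρ) : (ρ * Y₄).trace = 0 := by
  obtain ⟨n, p, A, B, hp, hps, hA, hB, rfl⟩ := h
  rw [Finset.sum_mul, Matrix.trace_sum]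
  apply Finset.sum_eq_zero
  intro k _
  rw [Matrix.smul_mul, Matrix.trace_smul]
  have : (A k ⊗ₖ B k) * Y₄ = -((A k * y) ⊗ₖ (B k * y)) := by
    simp [Y₄, Matrix.mul_kronecker_mul]
  rw [this, Matrix.trace_neg, Matrix.trace_kronecker,
    trace_mul_y_eq_zero _ (hA k).1, trace_mul_y_eq_zero _ (hB k).1]
  simp

lemma trace_ωp_Y : (ωp * Y₄).trace = 1 := by
  simp [ωp, Y₄, Matrix.trace, Matrix.mul_apply, Fintype.sum_prod_type,
    Fin.sum_univ_two, y, Matrix.one_apply, Matrix.diag, Prod.ext_iff]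
  norm_num

lemma trace_ωm_Y : (ωm * Y₄).trace = -1 := by
  simp [ωm, Y₄, Matrix.trace, Matrix.mul_apply, Fintype.sum_prod_type,
    Fin.sum_univ_two, y, Matrix.one_apply, Matrix.diag, Prod.ext_iff]
  norm_num

lemma ωp_symm : ωp.IsSymm := by
  rw [Matrix.IsSymm]
  ext ⟨i,j⟩ ⟨k,l⟩
  fin_cases i <;> fin_cases j <;> fin_cases k <;> fin_cases l <;>
    simp [ωp, Y₄, y, Matrix.transpose_apply, Matrix.one_apply, Prod.ext_iff]

lemma ωm_symm : ωm.IsSymm := by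
  rw [Matrix.IsSymm]
  ext ⟨i,j⟩ ⟨k,l⟩
  fin_cases i <;> fin_cases j <;> fin_cases k <;> fin_cases l <;>
    simp [ωm, Y₄, y, Matrix.transpose_apply, Matrix.one_apply, Prod.ext_iff]

lemma ωp_sq : ((1 : Matrix (Fin 2 × Fin 2) (Fin 2 × Fin 2) ℝ) + Y₄)ᴴ *
    ((1 : Matrix (Fin 2 × Fin 2) (Fin 2 × Fin 2) ℝ) + Y₄) =
    (2:ℝ) • ((1 : Matrix (Fin 2 × Fin 2) (Fin 2 × Fin 2) ℝ) + Y₄) := by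
  ext ⟨i,j⟩ ⟨k,l⟩
  fin_cases i <;> fin_cases j <;> fin_cases k <;> fin_cases l <;>
    simp [Matrix.mul_apply, Fintype.sum_prod_type, Fin.sum_univ_two, Y₄, y,
      Matrix.one_apply, Prod.ext_iff] <;> norm_num

lemma ωm_sq : ((1 : Matrix (Fin 2 × Fin 2) (Fin 2 × Fin 2) ℝ) - Y₄)ᴴ *
    ((1 : Matrix (Fin 2 × Fin 2) (Fin 2 × Fin 2) ℝ) - Y₄) =
    (2:ℝ) • ((1 : Matrix (Fin 2 × Fin 2) (Fin 2 × Fin 2) ℝ) - Y₄) := by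
  ext ⟨i,j⟩ ⟨k,l⟩
  fin_cases i <;> fin_cases j <;> fin_cases k <;> fin_cases l <;>
    simp [Matrix.mul_apply, Fintype.sum_prod_type, Fin.sum_univ_two, Y₄, y,
      Matrix.one_apply, Prod.ext_iff] <;> norm_num

lemma psd_smul {n : Type*} [Fintype n] {M : Matrix n n ℝ} (hM : M.PosSemidef)
    {c : ℝ} (hc : 0 ≤ c) : (c • M).PosSemidef := by
  constructor
  · simp only [Matrix.IsHermitian, Matrix.conjTranspose_smul, star_trivial, hM.1.eq]
  · intro x
    exact (hM.smul hc).2 x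

lemma ωp_psd : ωp.PosSemidef := by
  have h : ωp = (1/8 : ℝ) • (((1 : Matrix (Fin 2 × Fin 2) (Fin 2 × Fin 2) ℝ) + Y₄)ᴴ *
      ((1 : Matrix (Fin 2 × Fin 2) (Fin 2 × Fin 2) ℝ) + Y₄)) := by
    rw [ωp_sq, smul_smul, ωp]; norm_num
  rw [h]
  exact psd_smul (Matrix.posSemidef_conjTranspose_mul_self _) (by norm_num)

lemma ωm_psd : ωm.PosSemidef := by
  have h : ωm = (1/8 : ℝ) • (((1 : Matrix (Fin 2 × Fin 2) (Fin 2 × Fin 2) ℝ) - Y₄)ᴴ *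
      ((1 : Matrix (Fin 2 × Fin 2) (Fin 2 × Fin 2) ℝ) - Y₄)) := by
    rw [ωm_sq, smul_smul, ωm]; norm_num
  rw [h]
  exact psd_smul (Matrix.posSemidef_conjTranspose_mul_self _) (by norm_num)

lemma ωp_tr : ωp.trace = 1 := by
  simp [ωp, Y₄, Matrix.trace, Matrix.diag, Fintype.sum_prod_type,
    Fin.sum_univ_two, y, Matrix.one_apply]
  norm_num

lemma ωm_tr : ωm.trace = 1 := by
  simp [ωm, Y₄, Matrix.trace, Matrix.diag, Fintype.sum_prod_type,
    Fin.sum_univ_two, y, Matrix.one_apply]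
  norm_num

lemma Pp_psd : Pp.PosSemidef := by
  have h : Ppᴴ * Pp = Pp := by
    ext i j
    fin_cases i <;> fin_cases j <;>
      simp [Pp, σy, Matrix.mul_apply, Fin.sum_univ_two, Matrix.one_apply,
        Matrix.conjTranspose_apply] <;> (try ring_nf) <;>
      (try norm_num [Complex.I_sq, map_ofNat, Complex.ext_iff])
  have := Matrix.posSemidef_conjTranspose_mul_self Pp
  rwa [h] at this

lemma Pm_psd : Pm.PosSemidef := by
  have h : Pmᴴ * Pm = Pm := by
    ext i j
    fin_cases i <;> fin_cases j <;>
      simp [Pm, σy, Matrix.mul_apply, Fin.sum_univ_two, Matrix.one_apply,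
        Matrix.conjTranspose_apply] <;> (try ring_nf) <;>
      (try norm_num [Complex.I_sq, map_ofNat, Complex.ext_iff])
  have := Matrix.posSemidef_conjTranspose_mul_self Pm
  rwa [h] at this

lemma Pp_tr : Pp.trace = 1 := by
  simp [Pp, σy, Matrix.trace_fin_two, Matrix.one_apply]; try norm_num

lemma Pm_tr : Pm.trace = 1 := by
  simp [Pm, σy, Matrix.trace_fin_two, Matrix.one_apply]; try norm_num

lemma mapP : ωp.map (Complex.ofReal) = (1 / 2 : ℂ) • (Pp ⊗ₖ Pp + Pm ⊗ₖ Pm) := by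
  ext ⟨i,j⟩ ⟨k,l⟩
  fin_cases i <;> fin_cases j <;> fin_cases k <;> fin_cases l <;>
    simp [ωp, Y₄, y, Pp, Pm, σy, Matrix.one_apply, Prod.ext_iff, Matrix.map_apply] <;>
      (try ring_nf) <;> (try norm_num [Complex.I_sq, map_ofNat, Complex.ext_iff]) <;> (try ring)

lemma mapM : ωm.map (Complex.ofReal) = (1 / 2 : ℂ) • (Pp ⊗ₖ Pm + Pm ⊗ₖ Pp) := by
  ext ⟨i,j⟩ ⟨k,l⟩
  fin_cases i <;> fin_cases j <;> fin_cases k <;> fin_cases l <;>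
    simp [ωm, Y₄, y, Pp, Pm, σy, Matrix.one_apply, Prod.ext_iff, Matrix.map_apply] <;>
      (try ring_nf) <;> (try norm_num [Complex.I_sq, map_ofNat, Complex.ext_iff]) <;> (try ring)

lemma csep (σ : Matrix (Fin 2 × Fin 2) (Fin 2 × Fin 2) ℂ)
    (X X' Z Z' : Matrix (Fin 2) (Fin 2) ℂ)
    (hX : X.PosSemidef ∧ X.trace = 1) (hX' : X'.PosSemidef ∧ X'.trace = 1)
    (hZ : Z.PosSemidef ∧ Z.trace = 1) (hZ' : Z'.PosSemidef ∧ Z'.trace = 1)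
    (h : σ = (1 / 2 : ℂ) • (X ⊗ₖ X' + Z ⊗ₖ Z')) : ComplexSeparable σ := by
  refine ⟨2, ![1/2, 1/2], ![X, Z], ![X', Z'], ?_, ?_, ?_, ?_, ?_⟩
  · intro k; fin_cases k <;> norm_num
  · simp [Fin.sum_univ_two]; norm_num
  · intro k; fin_cases k
    · simpa using hX
    · simpa using hZ
  · intro k; fin_cases k
    · simpa using hX'
    · simpa using hZ'
  · rw [h, Fin.sum_univ_two]
    push_cast
    simp [smul_add]

end Aux

/-- **The paper's states ω_± (Eqs. (36)–(37)).**
(a) ω₊ and ω₋ are two-rebit states; (b) neither is real-separable;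
(c) their complex embeddings decompose as convex mixtures of products of the
σ_y eigenprojectors, hence both embeddings are complex-separable. -/



theorem stmt9 :
    (IsTwoRebitState ωp ∧ IsTwoRebitState ωm) ∧
    (¬ RealSeparable ωp ∧ ¬ RealSeparable ωm) ∧
    (ωp.map (Complex.ofReal) = (1 / 2 : ℂ) • (Pp ⊗ₖ Pp + Pm ⊗ₖ Pm) ∧
      ωm.map (Complex.ofReal) = (1 / 2 : ℂ) • (Pp ⊗ₖ Pm + Pm ⊗ₖ Pp)) ∧
    (ComplexSeparable (ωp.map (Complex.ofReal)) ∧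
      ComplexSeparable (ωm.map (Complex.ofReal))) := by
  refine ⟨⟨⟨ωp_symm, ωp_psd, ωp_tr⟩, ⟨ωm_symm, ωm_psd, ωm_tr⟩⟩, ⟨?_, ?_⟩,
    ⟨mapP, mapM⟩, ?_, ?_⟩
  · intro h
    have := sep_trace _ h
    rw [trace_ωp_Y] at this
    norm_num at this
  · intro h
    have := sep_trace _ h
    rw [trace_ωm_Y] at this
    norm_num at this
  · exact csep _ Pp Pp Pm Pm ⟨Pp_psd, Pp_tr⟩ ⟨Pp_psd, Pp_tr⟩ ⟨Pm_psd, Pm_tr⟩ ⟨Pm_psd, Pm_tr⟩ mapP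
  · exact csep _ Pp Pm Pm Pp ⟨Pp_psd, Pp_tr⟩ ⟨Pm_psd, Pm_tr⟩ ⟨Pm_psd, Pm_tr⟩ ⟨Pp_psd, Pp_tr⟩ mapM
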